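/- For λ > 0 and any real c ≥ 0, λ·√(2/π)·exp(λz) · ∫_0^∞ exp(−(c+z)²/(2r²) − λ²r²/2) dr = exp(−λ·c), where z > 0. In particular, taking c = y ≥ 0 gives that ∫_0^∞ exp(−(y²+2yz)/(2r)) p(r,z,λr) dr = exp(−λy)/λ. -/

import Mathlib

open MeasureTheory Real

/-- Gaussian density with variance `t` and mean `m`, evaluated at `x`. -/
noncomputable def gaussDensity (t x m : ℝ) : ℝ :=
  Real.exp (-(x - m) ^ 2 / (2 * t)) / Real.sqrt (2 * Real.pi * t)

lemma glasserJ (a b : ℝ) (ha : 0 < a) (hb : 0 < b) :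
    ∫ r in Set.Ioi (0 : ℝ), Real.exp (-(b * r - a / r) ^ 2 / 2) =
      Real.sqrt (2 * Real.pi) / (2 * b) := by
  set g : ℝ → ℝ := fun r => Real.exp (-(b * r - a / r) ^ 2 / 2) with hgdef
  have hg_meas : Measurable g := Real.measurable_exp.comp ((((measurable_const.mul measurable_id).sub (measurable_const.div measurable_id)).pow_const 2).neg.div_const 2)
  have hg_int : IntegrableOn g (Set.Ioi (0:ℝ)) := by
    have hdom : Integrable (fun r : ℝ => Real.exp (a * b) * Real.exp (-(b^2/2) * r^2)) := by
      exact (integrable_exp_neg_mul_sq (by positivity)).const_mul _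
    refine (hdom.restrict (s := Set.Ioi 0)).mono' hg_meas.aestronglyMeasurable.restrict ?_
    filter_upwards [ae_restrict_mem measurableSet_Ioi] with r hr
    have hr' : (0:ℝ) < r := hr
    rw [Real.norm_eq_abs, abs_of_pos (Real.exp_pos _), ← Real.exp_add]
    apply Real.exp_le_exp.2
    have h1 : (b*r - a/r)^2 = b^2*r^2 - 2*(a*b) + (a/r)^2 := by field_simp; ring
    nlinarith [sq_nonneg (a/r)]
  -- change of variables φ r = b r - a/r
  have hderiv : ∀ r ∈ Set.Ioi (0:ℝ),
      HasDerivWithinAt (fun r => b*r - a/r) (b + a/r^2) (Set.Ioi 0) r := by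
    intro r hr
    have hr' : (0:ℝ) < r := hr
    have hinv : HasDerivAt (fun x : ℝ => x⁻¹) (-(r^2)⁻¹) r := hasDerivAt_inv hr'.ne'
    have h1 := ((hasDerivAt_id r).const_mul b).sub (hinv.const_mul a)
    have h3 : b * 1 - a * -(r^2)⁻¹ = b + a/r^2 := by field_simp; ring
    have h2 : HasDerivAt (fun x : ℝ => b*x - a/x) (b + a/r^2) r := h3 ▸ h1
    exact h2.hasDerivWithinAt
  have hinj : Set.InjOn (fun r => b*r - a/r) (Set.Ioi 0) := by
    intro r1 h1 r2 h2 heq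
    have h1' : (0:ℝ) < r1 := h1
    have h2' : (0:ℝ) < r2 := h2
    simp only at heq
    have hkey : (r1 - r2) * (b*r1*r2 + a) = 0 := by
      field_simp at heq
      nlinarith [heq]
    rcases mul_eq_zero.1 hkey with h | h
    · exact sub_eq_zero.1 h
    · exact absurd h (by positivity : (0:ℝ) < b*r1*r2+a).ne'
  have himg : (fun r => b*r - a/r) '' Set.Ioi 0 = Set.univ := by
    refine Set.eq_univ_of_forall fun u => ?_
    set s := Real.sqrt (u^2 + 4*(a*b)) with hsdef
    clear_value s
    have hs2 : s^2 = u^2 + 4*(a*b) := by rw [hsdef]; exact Real.sq_sqrt (by positivity)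
    have hs0 : 0 ≤ s := hsdef ▸ Real.sqrt_nonneg _
    have hsu : |u| < s := by nlinarith [abs_nonneg u, sq_abs u]
    have hus : 0 < u + s := by nlinarith [neg_le_abs u]
    refine ⟨(u+s)/(2*b), div_pos hus (by positivity), ?_⟩
    show b * ((u+s)/(2*b)) - a / ((u+s)/(2*b)) = u
    field_simp
    linear_combination hs2
  have hA : ∫ u : ℝ, Real.exp (-u^2/2) = ∫ r in Set.Ioi (0:ℝ), |b + a/r^2| • g r := by
    have := integral_image_eq_integral_abs_deriv_smul measurableSet_Ioi hderiv hinj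
      (fun u => Real.exp (-u^2/2))
    rw [himg, Measure.restrict_univ] at this
    exact this
  have hgauss : ∫ u : ℝ, Real.exp (-u^2/2) = Real.sqrt (2*Real.pi) := by
    have := integral_gaussian (1/2)
    rw [show Real.pi / (1/2) = 2*Real.pi by ring] at this
    rw [← this]
    congr 1; ext u; ring_nf
  -- change of variables ψ r = a/(b*r)
  set ψ : ℝ → ℝ := fun r => a/(b*r) with hψdef
  have hψderiv : ∀ r ∈ Set.Ioi (0:ℝ), HasDerivWithinAt ψ (-(a/b)/r^2) (Set.Ioi 0) r := by
    intro r hr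
    have hr' : (0:ℝ) < r := hr
    have hinv : HasDerivAt (fun x : ℝ => x⁻¹) (-(r^2)⁻¹) r := hasDerivAt_inv hr'.ne'
    have h1 := hinv.const_mul (a/b)
    have h3 : (a/b) * -(r^2)⁻¹ = -(a/b)/r^2 := by field_simp
    have h2 : HasDerivAt ψ (-(a/b)/r^2) r := by
      have hfun : ψ = fun x : ℝ => (a/b) * x⁻¹ := by
        funext x
        by_cases hx : x = 0
        · simp [hψdef, hx]
        · simp only [hψdef]; field_simp
      rw [hfun]; exact h3 ▸ h1
    exact h2.hasDerivWithinAt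
  have hψinj : Set.InjOn ψ (Set.Ioi 0) := by
    intro r1 h1 r2 h2 heq
    have h1' : (0:ℝ) < r1 := h1
    have h2' : (0:ℝ) < r2 := h2
    simp only [hψdef] at heq
    field_simp [ha.ne', hb.ne'] at heq
    linarith
  have hψimg : ψ '' Set.Ioi 0 = Set.Ioi 0 := by
    ext x
    constructor
    · rintro ⟨r, hr, rfl⟩
      exact div_pos ha (mul_pos hb hr)
    · intro hx
      have hx' : (0:ℝ) < x := hx
      refine ⟨a/(b*x), div_pos ha (mul_pos hb hx'), ?_⟩
      show a/(b*(a/(b*x))) = x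
      field_simp
  have hψg : ∀ r ∈ Set.Ioi (0:ℝ), |-(a/b)/r^2| • g (ψ r) = (a/b)/r^2 * g r := by
    intro r hr
    have hr' : (0:ℝ) < r := hr
    have habs : |(-(a/b)/r^2)| = (a/b)/r^2 := by
      rw [neg_div, abs_neg, abs_of_pos (by positivity)]
    have hgg : g (ψ r) = g r := by
      simp only [hgdef, hψdef]
      have key : (b * (a/(b*r)) - a/(a/(b*r)))^2 = (b*r - a/r)^2 := by
        have h4 : b * (a/(b*r)) - a/(a/(b*r)) = -(b*r - a/r) := by field_simp; ring
        rw [h4, neg_sq]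
      rw [key]
    rw [habs, hgg, smul_eq_mul]
  have hB : (∫ r in Set.Ioi (0:ℝ), g r) = ∫ r in Set.Ioi (0:ℝ), (a/b)/r^2 * g r := by
    have h := integral_image_eq_integral_abs_deriv_smul measurableSet_Ioi hψderiv hψinj g
    rw [hψimg] at h
    rw [h]
    exact setIntegral_congr_fun measurableSet_Ioi hψg
  have hB_int : IntegrableOn (fun r => (a/b)/r^2 * g r) (Set.Ioi (0:ℝ)) := by
    have h := integrableOn_image_iff_integrableOn_abs_deriv_smul measurableSet_Ioi hψderiv hψinj g
    rw [hψimg] at h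
    exact (h.1 hg_int).congr_fun hψg measurableSet_Ioi
  have hsplit : ∀ r ∈ Set.Ioi (0:ℝ), |b + a/r^2| • g r = b * g r + b * ((a/b)/r^2 * g r) := by
    intro r hr
    have hr' : (0:ℝ) < r := hr
    rw [smul_eq_mul, abs_of_pos (by positivity)]
    field_simp
  have hfinal : Real.sqrt (2*Real.pi) = 2 * b * ∫ r in Set.Ioi (0:ℝ), g r := by
    rw [← hgauss, hA, setIntegral_congr_fun measurableSet_Ioi hsplit,
      integral_add (hg_int.const_mul b) (hB_int.const_mul b),
      MeasureTheory.integral_const_mul, MeasureTheory.integral_const_mul, ← hB]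
    ring
  rw [hfinal]
  field_simp

lemma glasserI (a b : ℝ) (ha : 0 < a) (hb : 0 < b) :
    ∫ r in Set.Ioi (0 : ℝ), Real.exp (-a^2/(2*r^2) - b^2*r^2/2) =
      Real.sqrt (2*Real.pi) / (2*b) * Real.exp (-(a*b)) := by
  have h1 : ∀ r ∈ Set.Ioi (0:ℝ),
      Real.exp (-a^2/(2*r^2) - b^2*r^2/2)
        = Real.exp (-(a*b)) * Real.exp (-(b*r - a/r)^2/2) := by
    intro r hr
    have hr' : (0:ℝ) < r := hr
    rw [← Real.exp_add]
    congr 1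
    field_simp
    ring
  rw [setIntegral_congr_fun measurableSet_Ioi h1, MeasureTheory.integral_const_mul,
    glasserJ a b ha hb]
  ring

lemma sqrt_two_div_pi_mul : Real.sqrt (2/Real.pi) * Real.sqrt (2*Real.pi) = 2 := by
  rw [← Real.sqrt_mul (by positivity)]
  rw [show (2/Real.pi) * (2*Real.pi) = 4 by field_simp; ring]
  rw [show (4:ℝ) = 2^2 by norm_num, Real.sqrt_sq (by norm_num)]

theorem stmt_2 (lam z : ℝ) (hlam : 0 < lam) (hz : 0 < z) :
    (∀ c : ℝ, 0 ≤ c →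
      lam * Real.sqrt (2 / Real.pi) * Real.exp (lam * z) *
          ∫ r in Set.Ioi (0 : ℝ),
            Real.exp (-(c + z) ^ 2 / (2 * r ^ 2) - lam ^ 2 * r ^ 2 / 2) =
        Real.exp (-lam * c)) ∧
    (∀ y : ℝ, 0 ≤ y →
      ∫ r in Set.Ioi (0 : ℝ),
          Real.exp (-(y ^ 2 + 2 * y * z) / (2 * r)) * gaussDensity r z (lam * r) =
        Real.exp (-lam * y) / lam) := by
  have part1 : ∀ c : ℝ, 0 ≤ c →
      lam * Real.sqrt (2 / Real.pi) * Real.exp (lam * z) *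
          ∫ r in Set.Ioi (0 : ℝ),
            Real.exp (-(c + z) ^ 2 / (2 * r ^ 2) - lam ^ 2 * r ^ 2 / 2) =
        Real.exp (-lam * c) := by
    intro c hc
    have ha : 0 < c + z := by linarith
    rw [glasserI (c+z) lam ha hlam]
    have hexp : Real.exp (lam*z) * Real.exp (-((c+z)*lam)) = Real.exp (-lam*c) := by
      rw [← Real.exp_add]; congr 1; ring
    calc lam * Real.sqrt (2/Real.pi) * Real.exp (lam*z) *
          (Real.sqrt (2*Real.pi)/(2*lam) * Real.exp (-((c+z)*lam)))
        = (Real.sqrt (2/Real.pi) * Real.sqrt (2*Real.pi)) / 2 * (lam/lam) *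
          (Real.exp (lam*z) * Real.exp (-((c+z)*lam))) := by ring
      _ = Real.exp (-lam*c) := by
          rw [sqrt_two_div_pi_mul, div_self hlam.ne', hexp]; ring
  refine ⟨part1, ?_⟩
  intro y hy
  set h : ℝ → ℝ := fun r => Real.exp (-(y^2+2*y*z)/(2*r)) * gaussDensity r z (lam*r) with hhdef
  have hsqderiv : ∀ s ∈ Set.Ioi (0:ℝ),
      HasDerivWithinAt (fun s : ℝ => s^2) (2*s) (Set.Ioi 0) s := by
    intro s hs
    simpa using (hasDerivAt_pow 2 s).hasDerivWithinAt
  have hsqinj : Set.InjOn (fun s : ℝ => s^2) (Set.Ioi 0) := by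
    intro r1 h1 r2 h2 heq
    have h1' : (0:ℝ) < r1 := h1
    have h2' : (0:ℝ) < r2 := h2
    simp only at heq
    calc r1 = Real.sqrt (r1^2) := (Real.sqrt_sq h1'.le).symm
      _ = Real.sqrt (r2^2) := by rw [heq]
      _ = r2 := Real.sqrt_sq h2'.le
  have hsqimg : (fun s : ℝ => s^2) '' Set.Ioi 0 = Set.Ioi 0 := by
    ext x
    constructor
    · rintro ⟨s, hs, rfl⟩
      exact pow_pos (Set.mem_Ioi.1 hs) 2
    · intro hx
      have hx' : (0:ℝ) < x := hx
      exact ⟨Real.sqrt x, Real.sqrt_pos.2 hx', Real.sq_sqrt hx'.le⟩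
  have hcov := integral_image_eq_integral_abs_deriv_smul measurableSet_Ioi hsqderiv hsqinj h
  rw [hsqimg] at hcov
  have hpt : ∀ s ∈ Set.Ioi (0:ℝ), |2*s| • h (s^2)
      = (Real.sqrt (2/Real.pi) * Real.exp (lam*z)) *
        Real.exp (-(y+z)^2/(2*s^2) - lam^2*s^2/2) := by
    intro s hs
    have hs' : (0:ℝ) < s := hs
    rw [smul_eq_mul, abs_of_pos (by positivity)]
    simp only [hhdef, gaussDensity]
    have hsqrt : Real.sqrt (2*Real.pi*s^2) = Real.sqrt (2*Real.pi) * s := by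
      rw [Real.sqrt_mul (by positivity), Real.sqrt_sq hs'.le]
    rw [hsqrt]
    have hEE : Real.exp (-(y^2+2*y*z)/(2*s^2)) * Real.exp (-(z - lam*s^2)^2/(2*s^2))
        = Real.exp (lam*z) * Real.exp (-(y+z)^2/(2*s^2) - lam^2*s^2/2) := by
      rw [← Real.exp_add, ← Real.exp_add]
      congr 1
      field_simp
      ring
    have hc2 : 2 / Real.sqrt (2*Real.pi) = Real.sqrt (2/Real.pi) := by
      rw [div_eq_iff (by positivity), sqrt_two_div_pi_mul]
    calc 2*s * (Real.exp (-(y^2+2*y*z)/(2*s^2)) *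
            (Real.exp (-(z - lam*s^2)^2/(2*s^2)) / (Real.sqrt (2*Real.pi) * s)))
        = (2 / Real.sqrt (2*Real.pi)) * (Real.exp (-(y^2+2*y*z)/(2*s^2)) *
            Real.exp (-(z - lam*s^2)^2/(2*s^2))) := by
          field_simp
      _ = (Real.sqrt (2/Real.pi) * Real.exp (lam*z)) *
            Real.exp (-(y+z)^2/(2*s^2) - lam^2*s^2/2) := by
          rw [hEE, hc2]; ring
  rw [hcov, setIntegral_congr_fun measurableSet_Ioi hpt, MeasureTheory.integral_const_mul]
  have hI := part1 y hy
  rw [eq_div_iff hlam.ne']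
  linear_combination hI
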